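/- Let n ≥ 1 and let X₁, …, Xₙ, Y be real Banach spaces with each Xᵢ nonzero. If every continuous n-linear operator from X₁ × ⋯ × Xₙ to Y is Lipschitz 1-summing, then every bounded linear operator S : X₁ → Y is absolutely 1-summing, i.e., for each such S there exists C ≥ 0 such that for every finite family x₁, …, x_k ∈ X₁ one has Σᵢ ‖S(xᵢ)‖ ≤ C · sup{ Σᵢ |x*(xᵢ)| : x* ∈ X₁* with ‖x*‖ ≤ 1 }. -/

import Mathlib

open scoped BigOperators

/-- `T` is Lipschitz `1`-summing with constant `c`. -/
def Lipschitz1Summing {n : ℕ} {X : Fin n → Type*} [∀ i, NormedAddCommGroup (X i)]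
    [∀ i, NormedSpace ℝ (X i)] {Y : Type*} [NormedAddCommGroup Y] [NormedSpace ℝ Y]
    (c : ℝ) (T : ContinuousMultilinearMap ℝ X Y) : Prop :=
  ∀ (k : ℕ) (u v : Fin k → ((i : Fin n) → X i)),
    (∑ i, ‖T (u i) - T (v i)‖) ≤
      c * ⨆ φ : {φ : ContinuousMultilinearMap ℝ X ℝ // ‖φ‖ ≤ 1},
        ∑ i, |φ.1 (u i) - φ.1 (v i)|

/-- If every continuous `n`-linear operator from `X₁ × ⋯ × Xₙ` (each `Xᵢ` nonzero) to
`Y` is Lipschitz `1`-summing, then every bounded linear `S : X₁ →  Y` is absolutely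
`1`-summing. -/
theorem linear_absolutely1Summing_of_all_lipschitz1Summing {n : ℕ} (hn : 0 < n)
    {X : Fin n → Type*}
    [∀ i, NormedAddCommGroup (X i)] [∀ i, NormedSpace ℝ (X i)] [∀ i, CompleteSpace (X i)]
    [∀ i, Nontrivial (X i)]
    {Y : Type*} [NormedAddCommGroup Y] [NormedSpace ℝ Y] [CompleteSpace Y]
    (hall : ∀ T : ContinuousMultilinearMap ℝ X Y, ∃ c : ℝ, 0 ≤ c ∧ Lipschitz1Summing c T)
    (S : X ⟨0, hn⟩ →L[ℝ] Y) :
    ∃ C : ℝ, 0 ≤ C ∧ ∀ (k : ℕ) (x : Fin k → X ⟨0, hn⟩),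
      (∑ i, ‖S (x i)‖) ≤
        C * ⨆ f : {f : X ⟨0, hn⟩ →L[ℝ] ℝ // ‖f‖ ≤ 1}, ∑ i, |f.1 (x i)| := by
  classical
  -- choose unit vectors
  have ha : ∀ i : Fin n, ∃ y : X i, ‖y‖ = 1 := by
    intro i
    obtain ⟨y, hy⟩ := exists_ne (0 : X i)
    refine ⟨‖y‖⁻¹ • y, ?_⟩
    rw [norm_smul, norm_inv, norm_norm, inv_mul_cancel₀ (norm_ne_zero_iff.mpr hy)]
  choose a ha1 using ha
  -- choose norming functionals
  have hf : ∀ i : Fin n, ∃ g : X i →L[ℝ] ℝ, ‖g‖ = 1 ∧ g (a i) = 1 := by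
    intro i
    have hne : a i ≠ 0 := by
      intro h
      have := ha1 i
      rw [h, norm_zero] at this
      exact one_ne_zero this.symm
    obtain ⟨g, hg, hga⟩ := exists_dual_vector ℝ (a i) (norm_ne_zero_iff.mpr hne)
    refine ⟨g, hg, ?_⟩
    rw [hga, ha1 i]
    norm_num
  choose f hf1 hfa using hf
  -- the auxiliary multilinear map
  have hprod0 : ∀ (m : ∀ j, X j) (z : X (⟨0, hn⟩ : Fin n)),
      (∏ j ∈ Finset.univ.erase (⟨0, hn⟩ : Fin n), f j (Function.update m (⟨0, hn⟩ : Fin n) z j))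
        = ∏ j ∈ Finset.univ.erase (⟨0, hn⟩ : Fin n), f j (m j) := by
    intro m z
    refine Finset.prod_congr rfl fun j hj => ?_
    rw [Function.update_of_ne (Finset.mem_erase.mp hj).1]
  have hsplit : ∀ (m : ∀ j, X j) (j : Fin n) (hj : j ≠ (⟨0, hn⟩ : Fin n)) (z : X j),
      (∏ j' ∈ Finset.univ.erase (⟨0, hn⟩ : Fin n), f j' (Function.update m j z j'))
        = f j z * ∏ j' ∈ (Finset.univ.erase (⟨0, hn⟩ : Fin n)).erase j, f j' (m j') := by
    intro m j hj z
    have hmem : j ∈ Finset.univ.erase (⟨0, hn⟩ : Fin n) := Finset.mem_erase.mpr ⟨hj, Finset.mem_univ j⟩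
    rw [← Finset.mul_prod_erase _ _ hmem, Function.update_self]
    congr 1
    refine Finset.prod_congr rfl fun j' hj' => ?_
    rw [Function.update_of_ne (Finset.mem_erase.mp hj').1]
  set P : MultilinearMap ℝ X Y :=
    { toFun := fun m => (∏ j ∈ Finset.univ.erase (⟨0, hn⟩ : Fin n), f j (m j)) • S (m (⟨0, hn⟩ : Fin n))
      map_update_add' := by
        intro _inst m j x y
        obtain rfl : _inst = instDecidableEqFin n := Subsingleton.elim _ _
        rcases eq_or_ne j (⟨0, hn⟩ : Fin n) with rfl | hj
        · rw [hprod0, hprod0, hprod0, Function.update_self, Function.update_self,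
            Function.update_self, map_add, smul_add]
        · have hji : Function.update m j x (⟨0, hn⟩ : Fin n) = m (⟨0, hn⟩ : Fin n) := Function.update_of_ne (Ne.symm hj) _ _
          have hjy : Function.update m j y (⟨0, hn⟩ : Fin n) = m (⟨0, hn⟩ : Fin n) := Function.update_of_ne (Ne.symm hj) _ _
          have hjxy : Function.update m j (x + y) (⟨0, hn⟩ : Fin n) = m (⟨0, hn⟩ : Fin n) :=
            Function.update_of_ne (Ne.symm hj) _ _
          rw [hsplit m j hj, hsplit m j hj, hsplit m j hj, hji, hjy, hjxy, map_add, add_mul,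
            add_smul]
      map_update_smul' := by
        intro _inst m j c x
        obtain rfl : _inst = instDecidableEqFin n := Subsingleton.elim _ _
        rcases eq_or_ne j (⟨0, hn⟩ : Fin n) with rfl | hj
        · rw [hprod0, hprod0, Function.update_self, Function.update_self, map_smul, smul_comm]
        · have hji : Function.update m j x (⟨0, hn⟩ : Fin n) = m (⟨0, hn⟩ : Fin n) := Function.update_of_ne (Ne.symm hj) _ _
          have hjx : Function.update m j (c • x) (⟨0, hn⟩ : Fin n) = m (⟨0, hn⟩ : Fin n) :=
            Function.update_of_ne (Ne.symm hj) _ _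
          rw [hsplit m j hj, hsplit m j hj, hji, hjx, map_smul, smul_eq_mul, mul_assoc,
            mul_smul] }
  have hbound : ∀ m : ∀ j, X j, ‖P m‖ ≤ ‖S‖ * ∏ j, ‖m j‖ := by
    intro m
    have h1 : ‖P m‖ = |∏ j ∈ Finset.univ.erase (⟨0, hn⟩ : Fin n), f j (m j)| * ‖S (m (⟨0, hn⟩ : Fin n))‖ := by
      simp only [P, MultilinearMap.coe_mk]
      rw [norm_smul, Real.norm_eq_abs]
    rw [h1]
    have h2 : |∏ j ∈ Finset.univ.erase (⟨0, hn⟩ : Fin n), f j (m j)| ≤ ∏ j ∈ Finset.univ.erase (⟨0, hn⟩ : Fin n), ‖m j‖ := by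
      rw [Finset.abs_prod]
      refine Finset.prod_le_prod (fun j _ => abs_nonneg _) fun j _ => ?_
      calc |f j (m j)| = ‖f j (m j)‖ := rfl
        _ ≤ ‖f j‖ * ‖m j‖ := (f j).le_opNorm _
        _ = ‖m j‖ := by rw [hf1, one_mul]
    calc |∏ j ∈ Finset.univ.erase (⟨0, hn⟩ : Fin n), f j (m j)| * ‖S (m (⟨0, hn⟩ : Fin n))‖
        ≤ (∏ j ∈ Finset.univ.erase (⟨0, hn⟩ : Fin n), ‖m j‖) * (‖S‖ * ‖m (⟨0, hn⟩ : Fin n)‖) :=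
          mul_le_mul h2 (S.le_opNorm _) (norm_nonneg _)
            (Finset.prod_nonneg fun j _ => norm_nonneg _)
      _ = ‖S‖ * ∏ j, ‖m j‖ := by
          rw [← Finset.mul_prod_erase Finset.univ (fun j => ‖m j‖) (Finset.mem_univ (⟨0, hn⟩ : Fin n))]
          ring
  set T : ContinuousMultilinearMap ℝ X Y := P.mkContinuous ‖S‖ hbound with hT
  obtain ⟨c, hc0, hcT⟩ := hall T
  refine ⟨c, hc0, fun k x => ?_⟩
  set u : Fin k → ∀ j, X j := fun i => Function.update a (⟨0, hn⟩ : Fin n) (x i)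
  set v : Fin k → ∀ j, X j := fun _ => Function.update a (⟨0, hn⟩ : Fin n) 0
  have hTu : ∀ i, T (u i) - T (v i) = S (x i) := by
    intro i
    have hprodone : (∏ j ∈ Finset.univ.erase (⟨0, hn⟩ : Fin n), f j (a j)) = 1 :=
      Finset.prod_eq_one fun j _ => hfa j
    have h1 : T (u i) = S (x i) := by
      show P (u i) = S (x i)
      simp only [P, MultilinearMap.coe_mk, u, hprod0, hprodone, Function.update_self, one_smul]
    have h2 : T (v i) = 0 := by
      show P (v i) = 0
      simp only [P, MultilinearMap.coe_mk, v, hprod0, hprodone, Function.update_self, one_smul,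
        map_zero]
    rw [h1, h2, sub_zero]
  -- boundedness of the linear sup
  have hbdd : BddAbove (Set.range fun g : {f : X (⟨0, hn⟩ : Fin n) →L[ℝ] ℝ // ‖f‖ ≤ 1} =>
      ∑ i, |g.1 (x i)|) := by
    refine ⟨∑ i, ‖x i‖, ?_⟩
    rintro _ ⟨g, rfl⟩
    refine Finset.sum_le_sum fun i _ => ?_
    calc |g.1 (x i)| = ‖g.1 (x i)‖ := rfl
      _ ≤ ‖g.1‖ * ‖x i‖ := g.1.le_opNorm _
      _ ≤ 1 * ‖x i‖ := by
          exact mul_le_mul_of_nonneg_right g.2 (norm_nonneg _)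
      _ = ‖x i‖ := one_mul _
  have key := hcT k u v
  simp only [hTu] at key
  haveI : Nonempty {φ : ContinuousMultilinearMap ℝ X ℝ // ‖φ‖ ≤ 1} :=
    ⟨⟨0, by simp⟩⟩
  have hsup : (⨆ φ : {φ : ContinuousMultilinearMap ℝ X ℝ // ‖φ‖ ≤ 1},
      ∑ i, |φ.1 (u i) - φ.1 (v i)|) ≤
      ⨆ g : {f : X (⟨0, hn⟩ : Fin n) →L[ℝ] ℝ // ‖f‖ ≤ 1}, ∑ i, |g.1 (x i)| := by
    refine ciSup_le fun φ => ?_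
    -- the induced linear functional
    set ψ : X (⟨0, hn⟩ : Fin n) →L[ℝ] ℝ := φ.1.toContinuousLinearMap a (⟨0, hn⟩ : Fin n) with hψ
    have hψnorm : ‖ψ‖ ≤ 1 := by
      refine ContinuousLinearMap.opNorm_le_bound _ zero_le_one fun z => ?_
      have hprodz : (∏ j, ‖Function.update a (⟨0, hn⟩ : Fin n) z j‖) = ‖z‖ := by
        rw [← Finset.mul_prod_erase Finset.univ _ (Finset.mem_univ (⟨0, hn⟩ : Fin n)), Function.update_self]
        have h1 : (∏ j ∈ Finset.univ.erase (⟨0, hn⟩ : Fin n), ‖Function.update a (⟨0, hn⟩ : Fin n) z j‖) = 1 := by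
          refine Finset.prod_eq_one fun j hj => ?_
          rw [Function.update_of_ne (Finset.mem_erase.mp hj).1, ha1]
        rw [h1, mul_one]
      calc ‖ψ z‖ ≤ ‖φ.1‖ * ∏ j, ‖Function.update a (⟨0, hn⟩ : Fin n) z j‖ := φ.1.le_opNorm _
        _ = ‖φ.1‖ * ‖z‖ := by rw [hprodz]
        _ ≤ 1 * ‖z‖ := mul_le_mul_of_nonneg_right φ.2 (norm_nonneg _)
    have hφψ : ∀ i, φ.1 (u i) - φ.1 (v i) = ψ (x i) := by
      intro i
      have h0 : φ.1 (v i) = ψ 0 := rfl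
      have h1 : φ.1 (u i) = ψ (x i) := rfl
      rw [h0, h1, map_zero, sub_zero]
    calc (∑ i, |φ.1 (u i) - φ.1 (v i)|) = ∑ i, |((⟨ψ, hψnorm⟩ :
          {f : X (⟨0, hn⟩ : Fin n) →L[ℝ] ℝ // ‖f‖ ≤ 1}).1 (x i))| := by
          refine Finset.sum_congr rfl fun i _ => ?_
          rw [hφψ]
      _ ≤ ⨆ g : {f : X (⟨0, hn⟩ : Fin n) →L[ℝ] ℝ // ‖f‖ ≤ 1}, ∑ i, |g.1 (x i)| :=
          le_ciSup hbdd (⟨ψ, hψnorm⟩ : {f : X (⟨0, hn⟩ : Fin n) →L[ℝ] ℝ // ‖f‖ ≤ 1})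
  exact key.trans (mul_le_mul_of_nonneg_left hsup hc0)
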